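/- Let (Ω, 𝓕, μ) be a probability space and n a positive integer. Let K be a set of (μ-a.e. equivalence classes of) measurable functions Ω → ℝ^n such that: (i) K is an ℝ-vector subspace of L^0(Ω; ℝ^n); (ii) K is closed under convergence in measure, i.e. if (f_k) ⊆ K converges in measure to f then f ∈ K; (iii) for every f ∈ K and every bounded measurable b : Ω → [0, ∞), the pointwise product b·f belongs to K. Then there exist measurable functions g^1, …, g^n : Ω → ℝ^n such that K = { f ∈ L^0(Ω; ℝ^n) : f(ω) ∈ span{g^1(ω), …, g^n(ω)} for μ-a.e. ω }. -/

import Mathlib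

open MeasureTheory Filter

open scoped ENNReal NNReal

namespace StructThm

noncomputable section

variable {n : ℕ}

def dot (x y : Fin n → ℝ) : ℝ := ∑ i, x i * y i

lemma dot_comm (x y : Fin n → ℝ) : dot x y = dot y x :=
  Finset.sum_congr rfl fun i _ => mul_comm _ _

lemma dot_add_left (x y z : Fin n → ℝ) : dot (x + y) z = dot x z + dot y z := by
  simp [dot, add_mul, Finset.sum_add_distrib]

lemma dot_smul_left (c : ℝ) (x z : Fin n → ℝ) : dot (c • x) z = c * dot x z := by
  simp [dot, Finset.mul_sum, mul_assoc]

lemma dot_zero_left (z : Fin n → ℝ) : dot 0 z = 0 := by simp [dot]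

lemma dot_zero_right (z : Fin n → ℝ) : dot z 0 = 0 := by simp [dot]

lemma dot_sub_left (x y z : Fin n → ℝ) : dot (x - y) z = dot x z - dot y z := by
  simp [dot, sub_mul, Finset.sum_sub_distrib]

lemma dot_sum_left {ι : Type*} (s : Finset ι) (f : ι → Fin n → ℝ) (z : Fin n → ℝ) :
    dot (∑ i ∈ s, f i) z = ∑ i ∈ s, dot (f i) z := by
  classical
  induction s using Finset.induction with
  | empty => simp [dot_zero_left]
  | insert _ _ h ih => rw [Finset.sum_insert h, Finset.sum_insert h, dot_add_left, ih]

lemma dot_self_nonneg (x : Fin n → ℝ) : 0 ≤ dot x x :=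
  Finset.sum_nonneg fun i _ => mul_self_nonneg _

lemma dot_self_eq_zero {x : Fin n → ℝ} : dot x x = 0 ↔ x = 0 := by
  constructor
  · intro h
    funext i
    have := (Finset.sum_eq_zero_iff_of_nonneg (fun i _ => mul_self_nonneg (x i))).mp h i
      (Finset.mem_univ i)
    have := mul_self_eq_zero.mp this
    simpa using this
  · rintro rfl; simp [dot]

def projc (x u : Fin n → ℝ) : ℝ := if u = 0 then 0 else dot x u / dot u u

lemma projc_zero_right (x : Fin n → ℝ) : projc x 0 = 0 := by simp [projc]

lemma projc_add_left (x y u : Fin n → ℝ) : projc (x + y) u = projc x u + projc y u := by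
  unfold projc
  split
  · ring
  · rw [dot_add_left]; ring

lemma projc_smul_left (c : ℝ) (x u : Fin n → ℝ) : projc (c • x) u = c * projc x u := by
  unfold projc
  split
  · ring
  · rw [dot_smul_left]; ring

lemma projc_zero_left (u : Fin n → ℝ) : projc 0 u = 0 := by
  unfold projc; split; rfl; rw [dot_zero_left]; simp

def gs (v : ℕ → Fin n → ℝ) : ℕ → Fin n → ℝ
  | j => v j - ∑ p ∈ (Finset.range j).attach,
      have : p.1 < j := Finset.mem_range.mp p.2
      projc (v j) (gs v p.1) • gs v p.1
  termination_by j => j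

lemma gs_def (v : ℕ → Fin n → ℝ) (j : ℕ) :
    gs v j = v j - ∑ j' ∈ Finset.range j, projc (v j) (gs v j') • gs v j' := by
  rw [gs]
  congr 1
  exact Finset.sum_attach (Finset.range j) (fun j' => projc (v j) (gs v j') • gs v j')

lemma gs_orth (v : ℕ → Fin n → ℝ) :
    ∀ j j', j' < j → dot (gs v j) (gs v j') = 0 := by
  intro j
  induction j using Nat.strong_induction_on with
  | _ j ih =>
    intro j' hj'
    rw [gs_def, dot_sub_left, dot_sum_left]
    have hsum : ∑ k ∈ Finset.range j, dot (projc (v j) (gs v k) • gs v k) (gs v j')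
        = dot (v j) (gs v j') := by
      rw [Finset.sum_eq_single j']
      · rw [dot_smul_left]
        unfold projc
        split
        · rename_i h0
          rw [h0, zero_mul, dot_zero_right]
        · rename_i h0
          have hne : dot (gs v j') (gs v j') ≠ 0 := fun hc => h0 (dot_self_eq_zero.mp hc)
          rw [div_mul_cancel₀ _ hne]
      · intro k hk hkj
        rw [dot_smul_left]
        rcases lt_or_gt_of_ne hkj with h | h
        · rw [dot_comm, ih j' hj' k h, mul_zero]
        · rw [ih k (Finset.mem_range.mp hk) j' h, mul_zero]
      · intro h
        exact absurd (Finset.mem_range.mpr hj') h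
    rw [hsum, sub_self]

lemma gs_orth' (v : ℕ → Fin n → ℝ) {j j' : ℕ} (h : j ≠ j') :
    dot (gs v j) (gs v j') = 0 := by
  rcases lt_or_gt_of_ne h with h | h
  · rw [dot_comm]; exact gs_orth v j' j h
  · exact gs_orth v j j' h


lemma sum_proj_mem (v : ℕ → Fin n → ℝ) (x : Fin n → ℝ) (N : ℕ) :
    (∑ j' ∈ Finset.range N, projc x (gs v j') • gs v j') ∈
      Submodule.span ℝ (gs v '' Set.Iio N) :=
  Submodule.sum_mem _ fun k hk => Submodule.smul_mem _ _
    (Submodule.subset_span ⟨k, Finset.mem_range.mp hk, rfl⟩)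

lemma image_Iio_succ (w : ℕ → Fin n → ℝ) (N : ℕ) :
    w '' Set.Iio (N + 1) = insert (w N) (w '' Set.Iio N) := by
  ext x
  simp only [Set.mem_image, Set.mem_Iio, Set.mem_insert_iff]
  constructor
  · rintro ⟨j, hj, rfl⟩
    rcases Nat.lt_succ_iff_lt_or_eq.mp hj with h | rfl
    · exact Or.inr ⟨j, h, rfl⟩
    · exact Or.inl rfl
  · rintro (rfl | ⟨j, hj, rfl⟩)
    · exact ⟨N, Nat.lt_succ_self N, rfl⟩
    · exact ⟨j, Nat.lt_succ_of_lt hj, rfl⟩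

lemma span_gs_eq (v : ℕ → Fin n → ℝ) : ∀ N,
    Submodule.span ℝ (gs v '' Set.Iio N) = Submodule.span ℝ (v '' Set.Iio N) := by
  intro N
  induction N with
  | zero =>
    have h0 : (Set.Iio 0 : Set ℕ) = ∅ := by ext x; simp
    rw [h0, Set.image_empty, Set.image_empty]
  | succ N ih =>
    rw [image_Iio_succ, image_Iio_succ, Submodule.span_insert, Submodule.span_insert, ih]
    have hmem : (∑ j' ∈ Finset.range N, projc (v N) (gs v j') • gs v j') ∈
        Submodule.span ℝ (v '' Set.Iio N) := ih ▸ sum_proj_mem v (v N) N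
    apply le_antisymm
    · apply sup_le
      · rw [Submodule.span_singleton_le_iff_mem]
        have : gs v N = v N - ∑ j' ∈ Finset.range N, projc (v N) (gs v j') • gs v j' :=
          gs_def v N
        rw [this]
        exact Submodule.sub_mem _
          (Submodule.mem_sup_left (Submodule.mem_span_singleton_self _))
          (Submodule.mem_sup_right hmem)
      · exact le_sup_right
    · apply sup_le
      · rw [Submodule.span_singleton_le_iff_mem]
        have : v N = gs v N + ∑ j' ∈ Finset.range N, projc (v N) (gs v j') • gs v j' := by
          rw [gs_def v N]; ring
        rw [this]
        exact Submodule.add_mem _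
          (Submodule.mem_sup_left (Submodule.mem_span_singleton_self _))
          (Submodule.mem_sup_right hmem)
      · exact le_sup_right

lemma linIndep_gs (v : ℕ → Fin n → ℝ) (T : Finset ℕ) (hT : ∀ j ∈ T, gs v j ≠ 0) :
    LinearIndependent ℝ (fun j : T => gs v j) := by
  rw [Fintype.linearIndependent_iff]
  intro c hc i
  have h0 : dot (∑ j : T, c j • gs v (j : ℕ)) (gs v (i : ℕ)) = 0 := by
    rw [hc, dot_zero_left]
  rw [dot_sum_left] at h0
  rw [Finset.sum_eq_single i] at h0
  · rw [dot_smul_left] at h0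
    have hne : dot (gs v (i : ℕ)) (gs v (i : ℕ)) ≠ 0 :=
      fun hcon => hT i i.2 (dot_self_eq_zero.mp hcon)
    exact (mul_eq_zero.mp h0).resolve_right hne
  · intro j _ hji
    rw [dot_smul_left, gs_orth' v (fun h => hji (Subtype.coe_injective h)), mul_zero]
  · intro h
    exact absurd (Finset.mem_univ i) h

lemma card_nonzero_le (v : ℕ → Fin n → ℝ) (T : Finset ℕ) (hT : ∀ j ∈ T, gs v j ≠ 0) :
    T.card ≤ n := by
  have := (linIndep_gs v T hT).fintype_card_le_finrank
  rwa [Fintype.card_coe, Module.finrank_fin_fun] at this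

/-- number of nonzero Gram-Schmidt vectors among the first `N` -/
noncomputable def cnt (v : ℕ → Fin n → ℝ) (N : ℕ) : ℕ :=
  ((Finset.range N).filter fun j => gs v j ≠ 0).card

lemma cnt_le (v : ℕ → Fin n → ℝ) (N : ℕ) : cnt v N ≤ n :=
  card_nonzero_le v _ fun j hj => (Finset.mem_filter.mp hj).2

lemma cnt_mono (v : ℕ → Fin n → ℝ) : Monotone (cnt v) := fun a b hab =>
  Finset.card_le_card (Finset.filter_subset_filter _ (Finset.range_subset_range.mpr hab))

lemma rank_eq_cnt (v : ℕ → Fin n → ℝ) (N : ℕ) :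
    Module.finrank ℝ (Submodule.span ℝ (v '' Set.Iio N)) = cnt v N := by
  classical
  rw [← span_gs_eq]
  set T := (Finset.range N).filter fun j => gs v j ≠ 0 with hT
  have hTprop : ∀ j ∈ T, gs v j ≠ 0 := fun j hj => (Finset.mem_filter.mp hj).2
  have hspan : Submodule.span ℝ (gs v '' Set.Iio N) =
      Submodule.span ℝ (Set.range (fun j : T => gs v (j : ℕ))) := by
    apply le_antisymm
    · rw [Submodule.span_le]
      rintro x ⟨j, hj, rfl⟩
      rw [Set.mem_Iio] at hj
      by_cases h0 : gs v j = 0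
      · rw [h0]; exact Submodule.zero_mem _
      · exact Submodule.subset_span
          ⟨⟨j, Finset.mem_filter.mpr ⟨Finset.mem_range.mpr hj, h0⟩⟩, rfl⟩
    · rw [Submodule.span_le]
      rintro x ⟨⟨j, hj⟩, rfl⟩
      exact Submodule.subset_span
        ⟨j, Set.mem_Iio.mpr (Finset.mem_range.mp (Finset.mem_filter.mp hj).1), rfl⟩
  rw [hspan, finrank_span_eq_card (linIndep_gs v T hTprop), Fintype.card_coe]
  rw [cnt]

lemma dot_gs_eq_zero_of_mem_span (v : ℕ → Fin n → ℝ) {N : ℕ} {x : Fin n → ℝ}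
    (hx : x ∈ Submodule.span ℝ (gs v '' Set.Iio N)) {j : ℕ} (hj : N ≤ j) :
    dot x (gs v j) = 0 := by
  induction hx using Submodule.span_induction with
  | mem y hy =>
    obtain ⟨k, hk, rfl⟩ := hy
    rw [Set.mem_Iio] at hk
    exact gs_orth' v (by omega)
  | zero => exact dot_zero_left _
  | add y z _ _ hy hz => rw [dot_add_left, hy, hz, add_zero]
  | smul c y _ hy => rw [dot_smul_left, hy, mul_zero]

lemma decomp_of_mem_span (v : ℕ → Fin n → ℝ) {N : ℕ} {x : Fin n → ℝ}
    (hx : x ∈ Submodule.span ℝ (gs v '' Set.Iio N)) :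
    x = ∑ j ∈ Finset.range N, projc x (gs v j) • gs v j := by
  induction hx using Submodule.span_induction with
  | mem y hy =>
    obtain ⟨k, hk, rfl⟩ := hy
    rw [Set.mem_Iio] at hk
    by_cases h0 : gs v k = 0
    · rw [h0]
      rw [Finset.sum_eq_zero]
      intro j _
      by_cases hjk : gs v j = 0
      · rw [hjk, smul_zero]
      · rw [projc_zero_left, zero_smul]
    · rw [Finset.sum_eq_single k]
      · rw [projc, if_neg h0, div_self (fun hc => h0 (dot_self_eq_zero.mp hc)), one_smul]
      · intro j _ hjk
        rw [projc]
        split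
        · rw [zero_smul]
        · rw [gs_orth' v (fun h => hjk h.symm), zero_div, zero_smul]
      · intro h
        exact absurd (Finset.mem_range.mpr hk) h
  | zero =>
    rw [Finset.sum_eq_zero]
    intro j _
    rw [projc_zero_left, zero_smul]
  | add y z _ _ hy hz =>
    nth_rewrite 1 [hy, hz]
    rw [← Finset.sum_add_distrib]
    congr 1
    funext j
    rw [projc_add_left, add_smul]
  | smul c y _ hy =>
    nth_rewrite 1 [hy]
    rw [Finset.smul_sum]
    congr 1
    funext j
    rw [projc_smul_left, mul_smul]


section Meas

variable {Ω : Type*} [MeasurableSpace Ω]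

lemma measurable_dot : Measurable (fun p : (Fin n → ℝ) × (Fin n → ℝ) => dot p.1 p.2) := by
  unfold dot
  apply Finset.measurable_sum
  intro i _
  exact ((measurable_pi_apply i).comp measurable_fst).mul
    ((measurable_pi_apply i).comp measurable_snd)

lemma measurable_projc : Measurable (fun p : (Fin n → ℝ) × (Fin n → ℝ) => projc p.1 p.2) := by
  unfold projc
  apply Measurable.ite
  · exact measurable_snd (measurableSet_singleton 0)
  · exact measurable_const
  · exact measurable_dot.div (measurable_dot.comp (measurable_snd.prodMk measurable_snd))

lemma measurable_gs {h : ℕ → Ω → Fin n → ℝ} (hm : ∀ j, Measurable (h j)) :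
    ∀ j, Measurable (fun ω => gs (fun l => h l ω) j) := by
  intro j
  induction j using Nat.strong_induction_on with
  | _ j ih =>
    have heq : (fun ω => gs (fun l => h l ω) j) = fun ω =>
        h j ω - ∑ j' ∈ Finset.range j,
          projc (h j ω) (gs (fun l => h l ω) j') • gs (fun l => h l ω) j' :=
      funext fun ω => gs_def _ j
    rw [heq]
    apply (hm j).sub
    apply Finset.measurable_sum
    intro k hk
    have hk' : k < j := Finset.mem_range.mp hk
    exact (measurable_projc.comp ((hm j).prodMk (ih k hk'))).smul (ih k hk')

lemma measurable_cnt {h : ℕ → Ω → Fin n → ℝ} (hm : ∀ j, Measurable (h j)) (N : ℕ) :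
    Measurable (fun ω => cnt (fun l => h l ω) N) := by
  have heq : (fun ω => cnt (fun l => h l ω) N) = fun ω =>
      ∑ j ∈ Finset.range N, if gs (fun l => h l ω) j ≠ 0 then 1 else 0 := by
    funext ω
    rw [cnt, Finset.card_filter]
  rw [heq]
  apply Finset.measurable_sum
  intro j _
  apply Measurable.ite _ measurable_const measurable_const
  exact ((measurable_gs hm j) (measurableSet_singleton 0)).compl

lemma measurable_apply_nat {β : Type*} [MeasurableSpace β] {u : ℕ → Ω → β}
    (hu : ∀ j, Measurable (u j)) {N : Ω → ℕ} (hN : Measurable N) :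
    Measurable (fun ω => u (N ω) ω) := by
  intro s hs
  have : (fun ω => u (N ω) ω) ⁻¹' s = ⋃ m, (N ⁻¹' {m}) ∩ (u m ⁻¹' s) := by
    ext ω
    simp only [Set.mem_preimage, Set.mem_iUnion, Set.mem_inter_iff, Set.mem_singleton_iff]
    constructor
    · intro hmem
      exact ⟨N ω, rfl, hmem⟩
    · rintro ⟨m, hm, hmem⟩
      rw [← hm] at hmem
      exact hmem
  rw [this]
  exact MeasurableSet.iUnion fun m =>
    (hN (measurableSet_singleton m)).inter (hu m hs)

lemma measurable_sInf {p : ℕ → Ω → Prop} (hp : ∀ j, MeasurableSet {ω | p j ω}) :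
    Measurable (fun ω => sInf {j | p j ω}) := by
  apply measurable_to_countable'
  intro m
  rcases Nat.eq_zero_or_pos m with rfl | hm
  · have : (fun ω => sInf {j | p j ω}) ⁻¹' {0} =
        {ω | p 0 ω} ∪ ⋂ j, {ω | p j ω}ᶜ := by
      ext ω
      simp only [Set.mem_preimage, Set.mem_singleton_iff, Set.mem_union, Set.mem_iInter,
        Set.mem_compl_iff, Set.mem_setOf_eq]
      rw [Nat.sInf_eq_zero]
      constructor
      · rintro (h0 | hempty)
        · exact Or.inl h0
        · refine Or.inr fun j hj => ?_
          have : j ∈ ({j | p j ω} : Set ℕ) := hj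
          rw [hempty] at this
          exact this
      · rintro (h0 | hall)
        · exact Or.inl h0
        · refine Or.inr (Set.eq_empty_iff_forall_notMem.mpr fun j hj => hall j hj)
    rw [this]
    exact (hp 0).union (MeasurableSet.iInter fun j => (hp j).compl)
  · have : (fun ω => sInf {j | p j ω}) ⁻¹' {m} =
        {ω | p m ω} ∩ ⋂ k ∈ Finset.range m, {ω | p k ω}ᶜ := by
      ext ω
      simp only [Set.mem_preimage, Set.mem_singleton_iff, Set.mem_inter_iff, Set.mem_iInter,
        Set.mem_compl_iff, Set.mem_setOf_eq, Finset.mem_range]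
      constructor
      · intro hinf
        have hne : ({j | p j ω} : Set ℕ).Nonempty := by
          by_contra hcon
          rw [Set.not_nonempty_iff_eq_empty] at hcon
          rw [hcon, Nat.sInf_empty] at hinf
          omega
        have hmem := Nat.sInf_mem hne
        rw [hinf] at hmem
        refine ⟨hmem, fun k hk hpk => ?_⟩
        have := Nat.sInf_le (s := {j | p j ω}) hpk
        omega
      · rintro ⟨hpm, hlt⟩
        have h1 : sInf {j | p j ω} ≤ m := Nat.sInf_le hpm
        have hne : ({j | p j ω} : Set ℕ).Nonempty := ⟨m, hpm⟩
        have hmem := Nat.sInf_mem hne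
        have h2 : ¬ sInf {j | p j ω} < m := fun hc => hlt _ hc hmem
        omega
    rw [this]
    exact (hp m).inter (MeasurableSet.iInter fun k => MeasurableSet.iInter fun _ => (hp k).compl)

end Meas

lemma span_range_eq_iSup (w : ℕ → Fin n → ℝ) :
    Submodule.span ℝ (Set.range w) = ⨆ N, Submodule.span ℝ (w '' Set.Iio N) := by
  have : Set.range w = ⋃ N, w '' Set.Iio N := by
    ext x
    simp only [Set.mem_range, Set.mem_iUnion, Set.mem_image, Set.mem_Iio]
    constructor
    · rintro ⟨j, rfl⟩; exact ⟨j + 1, j, Nat.lt_succ_self j, rfl⟩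
    · rintro ⟨N, j, _, rfl⟩; exact ⟨j, rfl⟩
  rw [this, Submodule.span_iUnion]

lemma mem_span_range_iff_N {w : ℕ → Fin n → ℝ} {x : Fin n → ℝ}
    (hx : x ∈ Submodule.span ℝ (Set.range w)) :
    ∃ N, x ∈ Submodule.span ℝ (w '' Set.Iio N) := by
  induction hx using Submodule.span_induction with
  | mem y hy =>
    obtain ⟨j, rfl⟩ := hy
    exact ⟨j + 1, Submodule.subset_span ⟨j, Nat.lt_succ_self j, rfl⟩⟩
  | zero => exact ⟨0, Submodule.zero_mem _⟩
  | add y z _ _ hy hz =>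
    obtain ⟨N₁, h1⟩ := hy
    obtain ⟨N₂, h2⟩ := hz
    refine ⟨max N₁ N₂, Submodule.add_mem _ ?_ ?_⟩
    · exact Submodule.span_mono (Set.image_mono (f := w) (Set.Iio_subset_Iio (le_max_left _ _))) h1
    · exact Submodule.span_mono (Set.image_mono (f := w) (Set.Iio_subset_Iio (le_max_right _ _))) h2
  | smul c y _ hy =>
    obtain ⟨N, hN⟩ := hy
    exact ⟨N, Submodule.smul_mem _ _ hN⟩

lemma nat_sup_attained {c : ℕ → ℕ} (hmono : Monotone c) (hbd : ∀ N, c N ≤ n) :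
    ∃ N₀, (⨆ N, (c N : ℝ≥0∞)) = c N₀ ∧ ∀ N, N₀ ≤ N → c N = c N₀ := by
  have hne : (Set.range c).Nonempty := ⟨c 0, 0, rfl⟩
  have hbdd : BddAbove (Set.range c) := ⟨n, by rintro x ⟨N, rfl⟩; exact hbd N⟩
  obtain ⟨N₀, hN₀⟩ := Nat.sSup_mem hne hbdd
  refine ⟨N₀, ?_, fun N hN => ?_⟩
  · apply le_antisymm
    · apply iSup_le
      intro N
      exact_mod_cast Nat.cast_le.mpr (hN₀ ▸ le_csSup hbdd ⟨N, rfl⟩)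
    · exact le_iSup (fun N => (c N : ℝ≥0∞)) N₀
  · have h1 : c N ≤ c N₀ := hN₀ ▸ le_csSup hbdd ⟨N, rfl⟩
    exact le_antisymm h1 (hmono hN)

lemma cnt_succ_of_ne {v : ℕ → Fin n → ℝ} {j : ℕ} (hj : gs v j ≠ 0) :
    cnt v (j + 1) = cnt v j + 1 := by
  rw [cnt, cnt, Finset.range_add_one, Finset.filter_insert, if_pos hj, Finset.card_insert_of_notMem]
  intro hc
  exact absurd (Finset.mem_range.mp (Finset.mem_filter.mp hc).1) (lt_irrefl j)


section Kprops

variable {Ω : Type*} [MeasurableSpace Ω] {μ : Measure Ω}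
variable {K : Set (Ω → Fin n → ℝ)}

lemma K_sum (hzero : (fun _ : Ω => (0 : Fin n → ℝ)) ∈ K)
    (hadd : ∀ f ∈ K, ∀ g ∈ K, (fun ω => f ω + g ω) ∈ K)
    {ι : Type*} (s : Finset ι) (F : ι → Ω → Fin n → ℝ) (hF : ∀ i ∈ s, F i ∈ K) :
    (fun ω => ∑ i ∈ s, F i ω) ∈ K := by
  classical
  induction s using Finset.induction with
  | empty => simpa using hzero
  | insert _ _ hnot ih =>
    rename_i a s
    have heq : (fun ω => ∑ i ∈ insert a s, F i ω) =
        fun ω => F a ω + ∑ i ∈ s, F i ω := by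
      funext ω; rw [Finset.sum_insert hnot]
    rw [heq]
    exact hadd _ (hF a (Finset.mem_insert_self a s)) _
      (ih fun i hi => hF i (Finset.mem_insert_of_mem hi))

lemma K_sub (hadd : ∀ f ∈ K, ∀ g ∈ K, (fun ω => f ω + g ω) ∈ K)
    (hsmul : ∀ c : ℝ, ∀ f ∈ K, (fun ω => c • f ω) ∈ K)
    {f g : Ω → Fin n → ℝ} (hf : f ∈ K) (hg : g ∈ K) :
    (fun ω => f ω - g ω) ∈ K := by
  have := hadd f hf _ (hsmul (-1) g hg)
  simpa [sub_eq_add_neg] using this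

lemma K_smul_meas [IsProbabilityMeasure μ]
    (hKmeas : ∀ f ∈ K, Measurable f)
    (hadd : ∀ f ∈ K, ∀ g ∈ K, (fun ω => f ω + g ω) ∈ K)
    (hsmul : ∀ c : ℝ, ∀ f ∈ K, (fun ω => c • f ω) ∈ K)
    (hclosed : ∀ f : ℕ → Ω → (Fin n → ℝ), (∀ k, f k ∈ K) →
      ∀ g : Ω → (Fin n → ℝ), Measurable g → TendstoInMeasure μ f atTop g → g ∈ K)
    (hmul : ∀ f ∈ K, ∀ b : Ω → ℝ, Measurable b → (∀ ω, 0 ≤ b ω) →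
      (∃ C : ℝ, ∀ ω, b ω ≤ C) → (fun ω => b ω • f ω) ∈ K)
    {f : Ω → Fin n → ℝ} (hf : f ∈ K) {c : Ω → ℝ} (hc : Measurable c) :
    (fun ω => c ω • f ω) ∈ K := by
  set b1 : ℕ → Ω → ℝ := fun m ω => min (max (c ω) 0) (m : ℝ) with hb1
  set b2 : ℕ → Ω → ℝ := fun m ω => min (max (-c ω) 0) (m : ℝ) with hb2
  have hb1m : ∀ m, Measurable (b1 m) := fun m =>
    (hc.max measurable_const).min measurable_const
  have hb2m : ∀ m, Measurable (b2 m) := fun m =>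
    (hc.neg.max measurable_const).min measurable_const
  have hb1K : ∀ m, (fun ω => b1 m ω • f ω) ∈ K := fun m =>
    hmul f hf (b1 m) (hb1m m) (fun ω => le_min (le_max_right _ _) (Nat.cast_nonneg m))
      ⟨m, fun ω => min_le_right _ _⟩
  have hb2K : ∀ m, (fun ω => b2 m ω • f ω) ∈ K := fun m =>
    hmul f hf (b2 m) (hb2m m) (fun ω => le_min (le_max_right _ _) (Nat.cast_nonneg m))
      ⟨m, fun ω => min_le_right _ _⟩
  set seq : ℕ → Ω → Fin n → ℝ := fun m ω => (b1 m ω - b2 m ω) • f ω with hseq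
  have hseqK : ∀ m, seq m ∈ K := by
    intro m
    have := K_sub hadd hsmul (hb1K m) (hb2K m)
    have heq : (fun ω => b1 m ω • f ω - b2 m ω • f ω) = seq m := by
      funext ω; rw [hseq]; simp only; rw [sub_smul]
    rwa [heq] at this
  have htend : ∀ ω, Tendsto (fun m => seq m ω) atTop (nhds (c ω • f ω)) := by
    intro ω
    apply tendsto_const_nhds.congr'
    rw [Filter.EventuallyEq, eventually_atTop]
    refine ⟨Nat.ceil |c ω|, fun m hm => ?_⟩
    have hmc : |c ω| ≤ (m : ℝ) := le_trans (Nat.le_ceil _) (Nat.cast_le.mpr hm)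
    have h1 : b1 m ω = max (c ω) 0 :=
      min_eq_left (le_trans (max_le (le_abs_self _) (abs_nonneg _)) hmc)
    have h2 : b2 m ω = max (-c ω) 0 := by
      apply min_eq_left
      apply le_trans (max_le _ (abs_nonneg (c ω))) hmc
      rw [← abs_neg]
      exact le_abs_self _
    rw [hseq]
    simp only
    rw [h1, h2, max_zero_sub_max_neg_zero_eq_self]
  have hgm : Measurable (fun ω => c ω • f ω) := hc.smul (hKmeas f hf)
  apply hclosed seq hseqK _ hgm
  apply tendstoInMeasure_of_tendsto_ae
  · exact fun m => (hKmeas _ (hseqK m)).aestronglyMeasurable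
  · exact Filter.Eventually.of_forall htend

end Kprops


section Main

variable {Ω : Type*} [MeasurableSpace Ω]

lemma exists_good_h (μ : Measure Ω) [IsProbabilityMeasure μ]
    {K : Set (Ω → Fin n → ℝ)}
    (hKmeas : ∀ f ∈ K, Measurable f)
    (hzero : (fun _ : Ω => (0 : Fin n → ℝ)) ∈ K) :
    ∃ h : ℕ → Ω → Fin n → ℝ, (∀ j, h j ∈ K) ∧ (∀ j, Measurable (h j)) ∧
      ∀ f ∈ K, ∀ᵐ ω ∂μ, f ω ∈ Submodule.span ℝ (Set.range fun j => h j ω) := by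
  classical
  set val : (ℕ → Ω → Fin n → ℝ) → ℕ → ℝ≥0∞ :=
    fun v N => ∫⁻ ω, (cnt (fun l => v l ω) N : ℝ≥0∞) ∂μ with hval
  set d : ℝ≥0∞ := ⨆ (v : ℕ → Ω → Fin n → ℝ) (_ : ∀ j, v j ∈ K) (N : ℕ), val v N with hd
  have hval_le : ∀ v N, val v N ≤ n := by
    intro v N
    calc val v N ≤ ∫⁻ _, (n : ℝ≥0∞) ∂μ :=
          lintegral_mono fun ω => Nat.cast_le.mpr (cnt_le _ _)
      _ = n := by simp
  have hd_le : d ≤ n := by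
    apply iSup_le; intro v; apply iSup_le; intro _; apply iSup_le; intro N
    exact hval_le v N
  have hd_ne : d ≠ ⊤ := ne_top_of_le_ne_top (by simp) hd_le
  have hdle : ∀ v, (∀ j, v j ∈ K) → ∀ N, val v N ≤ d := by
    intro v hv N
    exact le_iSup_of_le v (le_iSup_of_le hv (le_iSup _ N))
  have sel : ∀ k : ℕ, ∃ q : (ℕ → Ω → Fin n → ℝ) × ℕ,
      (∀ j, q.1 j ∈ K) ∧ d ≤ val q.1 q.2 + (↑(k+1) : ℝ≥0∞)⁻¹ := by
    intro k
    by_cases hd0 : d = 0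
    · exact ⟨⟨fun _ => fun _ => 0, 0⟩, fun _ => hzero, by rw [hd0]; exact zero_le⟩
    · rcases le_total ((↑(k+1) : ℝ≥0∞))⁻¹ d with hεd | hεd
      · have hlt : d - (↑(k+1) : ℝ≥0∞)⁻¹ < d :=
          ENNReal.sub_lt_self hd_ne hd0 (by simp)
        conv at hlt => rw [hd]
        rw [lt_iSup_iff] at hlt
        obtain ⟨v, hv⟩ := hlt
        rw [lt_iSup_iff] at hv
        obtain ⟨hvK, hv⟩ := hv
        rw [lt_iSup_iff] at hv
        obtain ⟨N, hN⟩ := hv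
        refine ⟨⟨v, N⟩, hvK, ?_⟩
        calc d = d - (↑(k+1) : ℝ≥0∞)⁻¹ + (↑(k+1) : ℝ≥0∞)⁻¹ :=
              (tsub_add_cancel_of_le hεd).symm
          _ ≤ val v N + (↑(k+1) : ℝ≥0∞)⁻¹ := add_le_add_left hN.le _
      · exact ⟨⟨fun _ => fun _ => 0, 0⟩, fun _ => hzero,
          le_trans hεd (le_add_left le_rfl)⟩
  choose q hqK hqd using sel
  set h : ℕ → Ω → Fin n → ℝ := fun j ω => (q (Nat.unpair j).1).1 (Nat.unpair j).2 ω with hh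
  have hhK : ∀ j, h j ∈ K := fun j => hqK _ _
  have hhm : ∀ j, Measurable (h j) := fun j => hKmeas _ (hhK j)
  set ρN : ℕ → Ω → ℝ≥0∞ := fun N ω => (cnt (fun l => h l ω) N : ℝ≥0∞) with hρN
  have hρNm : ∀ N, Measurable (ρN N) :=
    fun N => measurable_from_top.comp (measurable_cnt hhm N)
  have hρNmono : Monotone ρN := fun N M hNM ω => Nat.cast_le.mpr (cnt_mono _ hNM)
  set ρ : Ω → ℝ≥0∞ := fun ω => ⨆ N, ρN N ω with hρ
  have hρm : Measurable ρ := Measurable.iSup hρNm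
  have hρint : ∫⁻ ω, ρ ω ∂μ = ⨆ N, val h N := by
    rw [lintegral_iSup hρNm hρNmono]
  -- supremum over N of val h N equals d
  have hsup_le : (⨆ N, val h N) ≤ d := iSup_le fun N => hdle h hhK N
  have hd_le_sup : d ≤ ⨆ N, val h N := by
    apply ENNReal.le_of_forall_pos_le_add
    intro ε hε _
    obtain ⟨k, hk⟩ := ENNReal.exists_inv_nat_lt (a := (ε : ℝ≥0∞)) (by exact_mod_cast hε.ne')
    have hkk : ((↑(k+1) : ℝ≥0∞))⁻¹ ≤ (ε : ℝ≥0∞) := by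
      refine le_trans ?_ hk.le
      exact ENNReal.inv_le_inv' (by exact_mod_cast Nat.le_succ k)
    have hclaim : val (q k).1 (q k).2 ≤ ⨆ N, val h N := by
      set M : ℕ := (Finset.range (q k).2).sup (fun l => Nat.pair k l) + 1 with hM
      have hpt : ∀ ω, (cnt (fun l => (q k).1 l ω) (q k).2 : ℝ≥0∞) ≤
          (cnt (fun l => h l ω) M : ℝ≥0∞) := by
        intro ω
        rw [Nat.cast_le, ← rank_eq_cnt, ← rank_eq_cnt]
        apply Submodule.finrank_mono
        apply Submodule.span_mono
        rintro x ⟨l, hl, rfl⟩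
        rw [Set.mem_Iio] at hl
        refine ⟨Nat.pair k l, ?_, ?_⟩
        · rw [Set.mem_Iio, hM]
          exact Nat.lt_succ_of_le (Finset.le_sup (Finset.mem_range.mpr hl))
        · rw [hh]
          simp [Nat.unpair_pair]
      calc val (q k).1 (q k).2 ≤ val h M := lintegral_mono hpt
        _ ≤ ⨆ N, val h N := le_iSup _ M
    calc d ≤ val (q k).1 (q k).2 + (↑(k+1) : ℝ≥0∞)⁻¹ := hqd k
      _ ≤ (⨆ N, val h N) + ε := add_le_add hclaim hkk
  have hρd : ∫⁻ ω, ρ ω ∂μ = d := by rw [hρint]; exact le_antisymm hsup_le hd_le_sup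
  refine ⟨h, hhK, hhm, ?_⟩
  intro f hf
  -- extended family
  set hf' : ℕ → Ω → Fin n → ℝ := fun j => if j = 0 then f else h (j - 1) with hhf'
  have hf'K : ∀ j, hf' j ∈ K := by
    intro j
    by_cases hj : j = 0
    · simpa [hhf', hj] using hf
    · simpa [hhf', hj] using hhK (j - 1)
  have hf'm : ∀ j, Measurable (hf' j) := fun j => hKmeas _ (hf'K j)
  set ρ'N : ℕ → Ω → ℝ≥0∞ := fun N ω => (cnt (fun l => hf' l ω) (N + 1) : ℝ≥0∞) with hρ'N
  have hρ'Nm : ∀ N, Measurable (ρ'N N) :=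
    fun N => measurable_from_top.comp (measurable_cnt hf'm (N + 1))
  have hρ'Nmono : Monotone ρ'N := fun N M hNM ω =>
    Nat.cast_le.mpr (cnt_mono _ (by omega))
  set ρ' : Ω → ℝ≥0∞ := fun ω => ⨆ N, ρ'N N ω with hρ'
  have hρ'm : Measurable ρ' := Measurable.iSup hρ'Nm
  have himg_sub : ∀ ω N, ((fun l => h l ω) '' Set.Iio N) ⊆ ((fun l => hf' l ω) '' Set.Iio (N + 1)) := by
    intro ω N x
    rintro ⟨l, hl, rfl⟩
    rw [Set.mem_Iio] at hl
    refine ⟨l + 1, Set.mem_Iio.mpr (by omega), ?_⟩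
    rw [hhf']
    simp
  have hle_pt : ∀ ω, ρ ω ≤ ρ' ω := by
    intro ω
    apply iSup_le
    intro N
    refine le_trans ?_ (le_iSup _ N)
    rw [hρN, hρ'N]
    simp only
    rw [Nat.cast_le, ← rank_eq_cnt, ← rank_eq_cnt]
    exact Submodule.finrank_mono (Submodule.span_mono (himg_sub ω N))
  have hρ'int : ∫⁻ ω, ρ' ω ∂μ = ⨆ N, val hf' (N + 1) := by
    rw [lintegral_iSup hρ'Nm hρ'Nmono]
  have hρ'd : ∫⁻ ω, ρ' ω ∂μ = d := by
    apply le_antisymm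
    · rw [hρ'int]
      exact iSup_le fun N => hdle hf' hf'K (N + 1)
    · rw [← hρd]
      exact lintegral_mono hle_pt
  -- conclude a.e. equality
  have hsub : ∫⁻ ω, (ρ' ω - ρ ω) ∂μ = 0 := by
    rw [lintegral_sub hρm (by rw [hρd]; exact hd_ne) (Filter.Eventually.of_forall hle_pt),
      hρ'd, hρd, tsub_self]
  have hae0 : ∀ᵐ ω ∂μ, ρ' ω - ρ ω = 0 := by
    have := (lintegral_eq_zero_iff (hρ'm.sub hρm)).mp hsub
    filter_upwards [this] with ω hω using hω
  filter_upwards [hae0] with ω hω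
  have hω' : ρ' ω ≤ ρ ω := tsub_eq_zero_iff_le.mp hω
  -- stabilization
  obtain ⟨N₁, hN₁sup, hN₁⟩ := nat_sup_attained (c := fun N => cnt (fun l => h l ω) N)
    (cnt_mono _) (fun N => cnt_le _ _)
  obtain ⟨N₂, hN₂sup, hN₂⟩ := nat_sup_attained (c := fun N => cnt (fun l => hf' l ω) (N + 1))
    (fun a b hab => cnt_mono _ (by omega)) (fun N => cnt_le _ _)
  set Ns : ℕ := max N₁ N₂ with hNs
  have hc1 : (cnt (fun l => h l ω) Ns : ℝ≥0∞) = ρ ω := by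
    rw [hρ, hρN]
    simp only
    rw [hN₁sup, hN₁ Ns (le_max_left _ _)]
  have hc2 : (cnt (fun l => hf' l ω) (Ns + 1) : ℝ≥0∞) = ρ' ω := by
    rw [hρ', hρ'N]
    simp only
    rw [hN₂sup, hN₂ Ns (le_max_right _ _)]
  have hcle : cnt (fun l => hf' l ω) (Ns + 1) ≤ cnt (fun l => h l ω) Ns := by
    rw [← Nat.cast_le (α := ℝ≥0∞), hc1, hc2]
    exact hω'
  have hspan_eq : Submodule.span ℝ ((fun l => h l ω) '' Set.Iio Ns) =
      Submodule.span ℝ ((fun l => hf' l ω) '' Set.Iio (Ns + 1)) := by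
    apply Submodule.eq_of_le_of_finrank_le (Submodule.span_mono (himg_sub ω Ns))
    rw [rank_eq_cnt, rank_eq_cnt]
    exact hcle
  have hfmem : f ω ∈ Submodule.span ℝ ((fun l => hf' l ω) '' Set.Iio (Ns + 1)) := by
    apply Submodule.subset_span
    refine ⟨0, Set.mem_Iio.mpr (by omega), ?_⟩
    simp [hhf']
  rw [← hspan_eq] at hfmem
  exact Submodule.span_mono (Set.image_subset_range _ _) hfmem

end Main

end
end StructThm

open StructThm

/-- Structure theorem for subspaces of `L⁰(Ω; ℝⁿ)` (sets of a.e. equivalence classes of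
measurable functions, modeled as sets of measurable functions closed under a.e. equality)
that are vector subspaces, closed under convergence in measure, and stable under
multiplication by bounded nonnegative measurable scalar functions: such a set is the set
of measurable selections of a measurably parametrized family of subspaces spanned by
`n` measurable vector fields. -/
theorem stmt_1 {Ω : Type*} [MeasurableSpace Ω] (μ : Measure Ω) [IsProbabilityMeasure μ]
    (n : ℕ) (hn : 0 < n) (K : Set (Ω → (Fin n → ℝ)))
    (hKmeas : ∀ f ∈ K, Measurable f)
    (hKae : ∀ f ∈ K, ∀ g : Ω → (Fin n → ℝ), Measurable g → f =ᵐ[μ] g → g ∈ K)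
    -- (i) K is a vector subspace of L⁰(Ω; ℝⁿ)
    (hzero : (fun _ : Ω => (0 : Fin n → ℝ)) ∈ K)
    (hadd : ∀ f ∈ K, ∀ g ∈ K, (fun ω => f ω + g ω) ∈ K)
    (hsmul : ∀ c : ℝ, ∀ f ∈ K, (fun ω => c • f ω) ∈ K)
    -- (ii) K is closed under convergence in measure
    (hclosed : ∀ f : ℕ → Ω → (Fin n → ℝ), (∀ k, f k ∈ K) →
      ∀ g : Ω → (Fin n → ℝ), Measurable g → TendstoInMeasure μ f atTop g → g ∈ K)
    -- (iii) K is stable under multiplication by bounded nonnegative measurable functions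
    (hmul : ∀ f ∈ K, ∀ b : Ω → ℝ, Measurable b → (∀ ω, 0 ≤ b ω) →
      (∃ C : ℝ, ∀ ω, b ω ≤ C) → (fun ω => b ω • f ω) ∈ K) :
    ∃ g : Fin n → Ω → (Fin n → ℝ), (∀ i, Measurable (g i)) ∧
      K = { f : Ω → (Fin n → ℝ) | Measurable f ∧
        ∀ᵐ ω ∂μ, f ω ∈ Submodule.span ℝ (Set.range fun i => g i ω) } := by
    classical
  obtain ⟨h, hhK, hhm, hae⟩ := exists_good_h μ hKmeas hzero
  set u : ℕ → Ω → Fin n → ℝ := fun j ω => gs (fun l => h l ω) j with hu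
  have hum : ∀ j, Measurable (u j) := measurable_gs hhm
  have huK : ∀ j, u j ∈ K := by
    intro j
    induction j using Nat.strong_induction_on with
    | _ j ih =>
      have hsumK : (fun ω => ∑ j' ∈ Finset.range j, projc (h j ω) (u j' ω) • u j' ω) ∈ K :=
        K_sum hzero hadd (Finset.range j)
          (fun j' => fun ω => projc (h j ω) (u j' ω) • u j' ω)
          (fun j' hj' =>
            K_smul_meas hKmeas hadd hsmul hclosed hmul (ih j' (Finset.mem_range.mp hj'))
              (measurable_projc.comp ((hhm j).prodMk (hum j'))))
      have hK' := K_sub hadd hsmul (hhK j) hsumK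
      have heq : (fun ω => h j ω - ∑ j' ∈ Finset.range j,
          projc (h j ω) (u j' ω) • u j' ω) = u j := by
        funext ω
        rw [hu]
        simp only
        exact (gs_def (fun l => h l ω) j).symm
      rwa [heq] at hK'
  set cn : Ω → ℕ → ℕ := fun ω N => cnt (fun l => h l ω) N with hcn
  set A : Fin n → Set Ω := fun i => ⋃ j, ({ω | u j ω ≠ 0} ∩ {ω | cn ω j = (i : ℕ)}) with hA
  have hAmeas : ∀ i, MeasurableSet (A i) := by
    intro i
    apply MeasurableSet.iUnion
    intro j
    exact ((hum j (measurableSet_singleton 0)).compl).inter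
      ((measurable_cnt hhm j) (measurableSet_singleton (i : ℕ)))
  set Nf : Fin n → Ω → ℕ := fun i ω => sInf {j | u j ω ≠ 0 ∧ cn ω j = (i : ℕ)} with hNf
  have hNfm : ∀ i, Measurable (Nf i) := by
    intro i
    apply measurable_sInf (p := fun j ω => u j ω ≠ 0 ∧ cn ω j = (i : ℕ))
    intro j
    exact ((hum j (measurableSet_singleton 0)).compl).inter
      ((measurable_cnt hhm j) (measurableSet_singleton (i : ℕ)))
  set g : Fin n → Ω → Fin n → ℝ := fun i => (A i).indicator (fun ω => u (Nf i ω) ω) with hg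
  have hgm : ∀ i, Measurable (g i) := fun i =>
    (measurable_apply_nat hum (hNfm i)).indicator (hAmeas i)
  have hspan_uh : ∀ ω, Submodule.span ℝ (Set.range fun j => u j ω) =
      Submodule.span ℝ (Set.range fun j => h j ω) := by
    intro ω
    rw [span_range_eq_iSup (w := fun j => u j ω), span_range_eq_iSup (w := fun j => h j ω)]
    refine iSup_congr fun N => ?_
    have huw : (fun j => u j ω) = gs (fun l => h l ω) := rfl
    rw [huw, span_gs_eq]
  have hgspan : ∀ ω, Submodule.span ℝ (Set.range fun i : Fin n => g i ω) =
      Submodule.span ℝ (Set.range fun j => u j ω) := by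
    intro ω
    apply le_antisymm
    · rw [Submodule.span_le]
      rintro x ⟨i, rfl⟩
      by_cases hAm : ω ∈ A i
      · rw [hg]
        simp only [Set.indicator_of_mem hAm]
        exact Submodule.subset_span ⟨Nf i ω, rfl⟩
      · rw [hg]
        simp only [Set.indicator_of_notMem hAm]
        exact Submodule.zero_mem _
    · rw [Submodule.span_le]
      rintro x ⟨j, rfl⟩
      beta_reduce
      by_cases h0 : u j ω = 0
      · rw [h0]
        exact Submodule.zero_mem _
      · have hsucc : cn ω (j + 1) = cn ω j + 1 := cnt_succ_of_ne h0
        have hub : cn ω (j + 1) ≤ n := cnt_le _ _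
        have hltn : cn ω j < n := by omega
        set i : Fin n := ⟨cn ω j, hltn⟩ with hi
        have hjmem : j ∈ {j' | u j' ω ≠ 0 ∧ cn ω j' = (i : ℕ)} := ⟨h0, rfl⟩
        have hNfj : Nf i ω = j := by
          apply le_antisymm (Nat.sInf_le hjmem)
          apply le_csInf ⟨j, hjmem⟩
          intro b hb
          by_contra hbj
          push_neg at hbj
          obtain ⟨hb0, hbc⟩ := hb
          have h1 : cn ω (b + 1) = cn ω b + 1 := cnt_succ_of_ne hb0
          have h2 : cn ω (b + 1) ≤ cn ω j := cnt_mono _ (by omega)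
          have h3 : (i : ℕ) = cn ω j := rfl
          omega
        have hAmem : ω ∈ A i := Set.mem_iUnion.mpr ⟨j, ⟨h0, rfl⟩⟩
        have hgej : g i ω = u j ω := by
          rw [hg]
          simp only [Set.indicator_of_mem hAmem]
          rw [hNfj]
        exact Submodule.subset_span ⟨i, hgej⟩
  refine ⟨g, hgm, ?_⟩
  apply Set.eq_of_subset_of_subset
  · intro f hf
    refine ⟨hKmeas f hf, ?_⟩
    filter_upwards [hae f hf] with ω hω
    rw [hgspan ω, hspan_uh ω]
    exact hω
  · rintro f ⟨hfm, hfae⟩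
    set fN : ℕ → Ω → Fin n → ℝ :=
      fun N ω => ∑ j ∈ Finset.range N, projc (f ω) (u j ω) • u j ω with hfNdef
    have hfNK : ∀ N, fN N ∈ K := fun N =>
      K_sum hzero hadd (Finset.range N) (fun j => fun ω => projc (f ω) (u j ω) • u j ω)
        (fun j _ => K_smul_meas hKmeas hadd hsmul hclosed hmul (huK j)
          (measurable_projc.comp (hfm.prodMk (hum j))))
    have htend : ∀ᵐ ω ∂μ, Tendsto (fun N => fN N ω) atTop (nhds (f ω)) := by
      filter_upwards [hfae] with ω hω
      rw [hgspan ω] at hω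
      obtain ⟨N₀, hN₀⟩ := mem_span_range_iff_N hω
      apply tendsto_const_nhds.congr'
      rw [Filter.EventuallyEq, eventually_atTop]
      refine ⟨N₀, fun N hN => ?_⟩
      have hmem : f ω ∈ Submodule.span ℝ (gs (fun l => h l ω) '' Set.Iio N₀) := hN₀
      have hdec := decomp_of_mem_span (fun l => h l ω) hmem
      show f ω = ∑ j ∈ Finset.range N,
        projc (f ω) (gs (fun l => h l ω) j) • gs (fun l => h l ω) j
      refine hdec.trans ?_
      apply Finset.sum_subset (Finset.range_subset_range.mpr hN)
      intro j hjN hjN₀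
      have hjge : N₀ ≤ j := by
        rw [Finset.mem_range] at hjN₀
        omega
      by_cases h0 : gs (fun l => h l ω) j = 0
      · rw [h0, smul_zero]
      · have hdot : dot (f ω) (gs (fun l => h l ω) j) = 0 :=
          dot_gs_eq_zero_of_mem_span _ hmem hjge
        rw [projc, if_neg h0, hdot, zero_div, zero_smul]
    exact hclosed fN hfNK f hfm
      (tendstoInMeasure_of_tendsto_ae
        (fun N => (hKmeas _ (hfNK N)).aestronglyMeasurable) htend)
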